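/- Let H and P be d×d complex matrices with P² = I and P·H·P = −H, and let T ∈ ℝ. Define the following maps on pairs (u, v) ∈ ℂ^d × ℂ^d (representing the clock-0 and clock-1 components of a state on a clock qubit tensored with ℂ^d): CP(u, v) = (u, P·v); E_t(u, v) = (exp(−i·t·H)·u, exp(−i·t·H)·v); SW(u, v) = (v, u). Then for every φ ∈ ℂ^d, the composition E_{T/2}(SW(CP(E_{T/2}(CP(φ, φ))))) equals (φ, exp(−i·T·H)·φ). -/

import Mathlib

open Matrix

variable {d : ℕ}

/-- Controlled-`P` gate on a clock qubit: acts as `P` on the clock-1 component. -/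
noncomputable def CP (P : Matrix (Fin d) (Fin d) ℂ) (w : (Fin d → ℂ) × (Fin d → ℂ)) :
    (Fin d → ℂ) × (Fin d → ℂ) :=
  (w.1, P.mulVec w.2)

/-- Time evolution under `H` for time `t` on both clock components. -/
noncomputable def Ev (H : Matrix (Fin d) (Fin d) ℂ) (t : ℝ)
    (w : (Fin d → ℂ) × (Fin d → ℂ)) : (Fin d → ℂ) × (Fin d → ℂ) :=
  ((NormedSpace.exp ((-(Complex.I * (t : ℂ))) • H)).mulVec w.1,
   (NormedSpace.exp ((-(Complex.I * (t : ℂ))) • H)).mulVec w.2)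

/-- Pauli-`X` on the clock qubit: swaps the two components. -/
def SW (w : (Fin d → ℂ) × (Fin d → ℂ)) : (Fin d → ℂ) × (Fin d → ℂ) :=
  (w.2, w.1)

/-- The echo circuit
`E_{T/2} ∘ SW ∘ CP ∘ E_{T/2} ∘ CP` maps `(φ, φ)` to `(φ, exp(−iTH)·φ)`,
i.e., it prepares the single-step history state. -/
theorem stmt_5 (H P : Matrix (Fin d) (Fin d) ℂ)
    (hP : P * P = 1) (hanti : P * H * P = -H) (T : ℝ) (φ : Fin d → ℂ) :
    Ev H (T / 2) (SW (CP P (Ev H (T / 2) (CP P (φ, φ)))))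
      = (φ, (NormedSpace.exp ((-(Complex.I * (T : ℂ))) • H)).mulVec φ) := by
  have hT2 : ((T / 2 : ℝ) : ℂ) = (T : ℂ) / 2 := by push_cast; ring
  set A : Matrix (Fin d) (Fin d) ℂ := (-(Complex.I * ((T : ℂ) / 2))) • H with hA
  have hPinv : P⁻¹ = P := Matrix.inv_eq_right_inv hP
  have hU : IsUnit P := ⟨⟨P, P, hP, hP⟩, rfl⟩
  have hPA : P * A * P = -A := by
    simp only [hA, neg_smul, mul_neg, neg_mul, Matrix.mul_smul, Matrix.smul_mul, hanti,
      smul_neg, neg_neg]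
  have hconj : P * NormedSpace.exp A * P = NormedSpace.exp (-A) := by
    rw [← hPA]
    nth_rewrite 2 [← hPinv]
    nth_rewrite 4 [← hPinv]
    exact (Matrix.exp_conj P A hU).symm
  have hinv : NormedSpace.exp A * NormedSpace.exp (-A) = 1 := by
    rw [← Matrix.exp_add_of_commute A (-A) (Commute.neg_right rfl), add_neg_cancel]
    simp [NormedSpace.exp_zero]
  have hdouble : NormedSpace.exp A * NormedSpace.exp A
      = NormedSpace.exp ((-(Complex.I * (T : ℂ))) • H) := by
    rw [← Matrix.exp_add_of_commute A A rfl]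
    congr 1
    rw [hA, ← add_smul]
    ring_nf
  simp only [Ev, CP, SW, hT2, ← hA, Matrix.mulVec_mulVec]
  refine Prod.ext ?_ ?_
  · rw [show NormedSpace.exp A * (P * (NormedSpace.exp A * P))
        = NormedSpace.exp A * (P * NormedSpace.exp A * P) by rw [← mul_assoc P], hconj, hinv,
      Matrix.one_mulVec]
  · rw [hdouble]
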